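/- Let r and a be coprime integers with r > a ≥ 1. Then in both types of three-dimensional toric flips φ: X ⇢ X^+ given by the White–Frumkin classification — type (i): a·e_1 + (r−a)·e_2 = r·e_3 + e_4, where X has one cyclic quotient singular point of type (1/r)(a, −a, 1) and X^+ has two cyclic quotient singular points of types (1/(r−a))(a, 1, −a) and (1/a)(1, r, −r); and type (ii): a·e_1 + e_2 = r·e_3 + e_4, where X has one cyclic quotient singular point of type (1/r)(a, −a, 1) and X^+ has one of type (1/a)(1, r, −r) — one has F(X) > F(X^+); equivalently, r − 1/r > ((r−a) − 1/(r−a)) + (a − 1/a) when a < r, and r − 1/r > a − 1/a. -/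
import Mathlib


/-- Example on toric flips. Let `r` and `a` be coprime
integers with `r > a ≥ 1`. Then in both types of three-dimensional toric flips
`φ : X ⇢ X⁺` given by the White–Frumkin classification — type (i):
`a·e₁ + (r-a)·e₂ = r·e₃ + e₄`, where `X` has one cyclic quotient singular point
of type `(1/r)(a,-a,1)` and `X⁺` has two cyclic quotient singular points of
types `(1/(r-a))(a,1,-a)` and `(1/a)(1,r,-r)`; and type (ii):
`a·e₁ + e₂ = r·e₃ + e₄`, where `X` has one cyclic quotient singular point of
type `(1/r)(a,-a,1)` and `X⁺` has one of type `(1/a)(1,r,-r)` — one has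
`F(X) > F(X⁺)`; equivalently,
`r - 1/r > ((r-a) - 1/(r-a)) + (a - 1/a)` (type (i), when `a < r`), and
`r - 1/r > a - 1/a` (type (ii)). -/
theorem toric_flip_fictitious_number_decreases (r a : ℕ)
    (ha : 1 ≤ a) (har : a < r) (hcop : Nat.Coprime r a) :
    -- type (i): `F(X) = r - 1/r > ((r-a) - 1/(r-a)) + (a - 1/a) = F(X⁺)`
    ((((r : ℚ) - (a : ℚ)) - 1 / ((r : ℚ) - (a : ℚ))) +
        ((a : ℚ) - 1 / (a : ℚ)) < (r : ℚ) - 1 / (r : ℚ)) ∧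
    -- type (ii): `F(X) = r - 1/r > a - 1/a = F(X⁺)`
    ((a : ℚ) - 1 / (a : ℚ) < (r : ℚ) - 1 / (r : ℚ)) := by
  have hA : (1:ℚ) ≤ (a:ℚ) := by exact_mod_cast ha
  have hR : (a:ℚ) < (r:ℚ) := by exact_mod_cast har
  have hA0 : (0:ℚ) < (a:ℚ) := by linarith
  have hRA : (0:ℚ) < (r:ℚ) - (a:ℚ) := by linarith
  have h1 : 1/(r:ℚ) < 1/(a:ℚ) := one_div_lt_one_div_of_lt hA0 hR
  have h2 : (0:ℚ) < 1/((r:ℚ) - (a:ℚ)) := by positivity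
  constructor <;> linarith
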